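/- Let a, b be natural numbers, not both zero. Consider the interval [1, a+b] of integers with the two pairings f(x) = x + a defined on [1, b] (with range [a+1, a+b]) and g(x) = x + b defined on [1, a] (with range [b+1, a+b]). Then the number of orbits of the equivalence relation on {1, ..., a+b} generated by f and g equals gcd(a, b). -/
import Mathlib

section Aux

variable (a b : ℕ)

/-- the generating relation -/
private def R (u v : ℕ) : Prop :=
  (1 ≤ u ∧ u ≤ b ∧ v = u + a) ∨ (1 ≤ u ∧ u ≤ a ∧ v = u + b)

private def H (x : ℕ) : ℕ := if x ≤ b then x + a else x - b

private lemma iter_lemma (hab : a + b ≠ 0) :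
    ∀ (k x : ℕ), 1 ≤ x → x ≤ a + b →
      1 ≤ (H a b)^[k] x ∧ (H a b)^[k] x ≤ a + b ∧
      Relation.EqvGen (R a b) x ((H a b)^[k] x) ∧
      (((H a b)^[k] x : ℕ) : ZMod (a + b)) = (x : ZMod (a+b)) + k * a := by
  intro k
  induction k with
  | zero =>
    intro x h1 h2
    simpa using ⟨h1, h2, Relation.EqvGen.refl x⟩
  | succ k ih =>
    intro x h1 h2
    obtain ⟨hy1, hy2, hyE, hyC⟩ := ih x h1 h2
    set y := (H a b)^[k] x with hy
    have hstep : 1 ≤ H a b y ∧ H a b y ≤ a + b ∧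
        Relation.EqvGen (R a b) y (H a b y) ∧
        ((H a b y : ℕ) : ZMod (a+b)) = (y : ZMod (a+b)) + a := by
      by_cases hb : y ≤ b
      · have hHy : H a b y = y + a := if_pos hb
        rw [hHy]
        refine ⟨by omega, by omega, ?_, by push_cast; ring⟩
        exact Relation.EqvGen.rel _ _ (Or.inl ⟨hy1, hb, rfl⟩)
      · have hby : b < y := lt_of_not_ge hb
        have hHy : H a b y = y - b := if_neg hb
        rw [hHy]
        refine ⟨by omega, by omega, ?_, ?_⟩
        · refine Relation.EqvGen.symm _ _ (Relation.EqvGen.rel _ _ (Or.inr ?_))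
          exact ⟨by omega, by omega, by omega⟩
        · have hsub : ((y - b : ℕ) : ZMod (a+b)) = (y : ZMod (a+b)) - b := by
            push_cast [Nat.cast_sub (le_of_lt hby)]
            ring
          rw [hsub]
          have hzero : ((a : ZMod (a+b)) + b) = 0 := by
            have h0 : (((a + b : ℕ)) : ZMod (a+b)) = 0 := ZMod.natCast_self _
            push_cast at h0
            linear_combination h0
          linear_combination -hzero
    rw [Function.iterate_succ_apply']
    refine ⟨hstep.1, hstep.2.1, Relation.EqvGen.trans _ _ _ hyE hstep.2.2.1, ?_⟩
    rw [hstep.2.2.2, hyC]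
    push_cast
    ring

private lemma mod_inj (u v : ℕ) (hu1 : 1 ≤ u) (hu2 : u ≤ a + b)
    (hv1 : 1 ≤ v) (hv2 : v ≤ a + b)
    (h : (u : ZMod (a+b)) = (v : ZMod (a+b))) : u = v := by
  have hmod : u % (a+b) = v % (a+b) := (ZMod.natCast_eq_natCast_iff _ _ _).mp h
  rcases eq_or_lt_of_le hu2 with h1 | h1 <;> rcases eq_or_lt_of_le hv2 with h2 | h2
  · omega
  · rw [h1, Nat.mod_self, Nat.mod_eq_of_lt h2] at hmod; omega
  · rw [h2, Nat.mod_self, Nat.mod_eq_of_lt h1] at hmod; omega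
  · rw [Nat.mod_eq_of_lt h1, Nat.mod_eq_of_lt h2] at hmod; exact hmod

private lemma backward (hab : a + b ≠ 0) (x y : ℕ) (hx1 : 1 ≤ x) (hx2 : x ≤ a + b)
    (hy1 : 1 ≤ y) (hy2 : y ≤ a + b)
    (h : (x : ZMod (Nat.gcd a b)) = (y : ZMod (Nat.gcd a b))) :
    Relation.EqvGen (R a b) x y := by
  set d := Nat.gcd a b with hd
  -- d ∣ y - x  (as integers)
  obtain ⟨c, hc⟩ : (d : ℤ) ∣ (y : ℤ) - x :=
    ((ZMod.natCast_eq_natCast_iff x y d).mp h).dvd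
  have hgcd : Nat.gcd a (a + b) = d := by
    rw [hd, add_comm, Nat.gcd_add_self_right]
  have hbez : (d : ℤ) = a * Int.gcdA a (a+b) + (a+b) * Int.gcdB a (a+b) := by
    have hb2 := Int.gcd_eq_gcd_ab (a : ℤ) ((a+b : ℕ) : ℤ)
    rw [Int.gcd_natCast_natCast, hgcd] at hb2
    push_cast at hb2 ⊢
    linarith [hb2]
  set p : ℤ := Int.gcdA a (a+b)
  set q : ℤ := Int.gcdB a (a+b)
  set s : ℤ := c * p with hs
  have hZ : (y : ℤ) = (x : ℤ) + s * a + (c * q) * ((a : ℤ) + b) := by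
    rw [hs]
    linear_combination hc + c * hbez
  have hzero : ((a : ZMod (a+b)) + b) = 0 := by
    have h0 : (((a + b : ℕ)) : ZMod (a+b)) = 0 := ZMod.natCast_self _
    push_cast at h0
    linear_combination h0
  have hzn : ((y : ℕ) : ZMod (a+b)) = (x : ZMod (a+b)) + (s : ZMod (a+b)) * a := by
    have h1 : (((y : ℤ)) : ZMod (a+b)) = (((x : ℤ) + s * a + (c * q) * ((a:ℤ) + b)) : ZMod (a+b)) := by
      exact_mod_cast congrArg (fun t : ℤ => (t : ZMod (a+b))) hZ
    push_cast at h1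
    rw [h1]
    linear_combination ((c : ZMod (a+b)) * (q : ZMod (a+b))) * hzero
  have hnpos : (0 : ℤ) < ((a + b : ℕ) : ℤ) := by exact_mod_cast Nat.pos_of_ne_zero hab
  set k : ℕ := (s % ((a+b : ℕ) : ℤ)).toNat with hk
  have hkZ : ((k : ℕ) : ℤ) = s % ((a+b : ℕ) : ℤ) :=
    Int.toNat_of_nonneg (Int.emod_nonneg s (ne_of_gt hnpos))
  have hkcast : ((k : ℕ) : ZMod (a+b)) = ((s : ℤ) : ZMod (a+b)) := by
    have h2 : (((s % ((a+b : ℕ) : ℤ)) : ℤ) : ZMod (a+b)) = ((s : ℤ) : ZMod (a+b)) := by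
      rw [ZMod.intCast_eq_intCast_iff]
      exact Int.emod_emod_of_dvd s dvd_rfl
    rw [← h2, ← hkZ]
    push_cast
    ring
  obtain ⟨hz1, hz2, hzE, hzC⟩ := iter_lemma a b hab k x hx1 hx2
  have hzy : (H a b)^[k] x = y := by
    refine mod_inj a b _ y hz1 hz2 hy1 hy2 ?_
    rw [hzC, hkcast, hzn]
  exact hzy ▸ hzE

private lemma forward (u v : ℕ) (h : R a b u v) :
    (u : ZMod (Nat.gcd a b)) = (v : ZMod (Nat.gcd a b)) := by
  have hda : ((a : ℕ) : ZMod (Nat.gcd a b)) = 0 :=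
    (ZMod.natCast_eq_zero_iff _ _).mpr (Nat.gcd_dvd_left a b)
  have hdb : ((b : ℕ) : ZMod (Nat.gcd a b)) = 0 :=
    (ZMod.natCast_eq_zero_iff _ _).mpr (Nat.gcd_dvd_right a b)
  rcases h with ⟨_, _, hv⟩ | ⟨_, _, hv⟩ <;> subst hv <;> push_cast <;> simp [hda, hdb]

private lemma forwardE (u v : ℕ) (h : Relation.EqvGen (R a b) u v) :
    (u : ZMod (Nat.gcd a b)) = (v : ZMod (Nat.gcd a b)) := by
  induction h with
  | rel u v huv => exact forward a b u v huv
  | refl u => rfl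
  | symm u v _ ih => exact ih.symm
  | trans u v w _ _ ih1 ih2 => exact ih1.trans ih2

end Aux

/-- The orbit count for the pseudogroup generated by the pairings
`f : [1,b] → [a+1,a+b], x ↦ x + a` and `g : [1,a] → [b+1,a+b], x ↦ x + b`
on the interval `{1, ..., a+b}` equals `gcd(a,b)`. -/
theorem stmt_1 (a b : ℕ) (hab : a + b ≠ 0) :
    Nat.card (Quotient (Setoid.comap
      (Subtype.val : {x : ℕ // 1 ≤ x ∧ x ≤ a + b} → ℕ)
      ⟨Relation.EqvGen (fun u v : ℕ =>
          (1 ≤ u ∧ u ≤ b ∧ v = u + a) ∨ (1 ≤ u ∧ u ≤ a ∧ v = u + b)),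
        Relation.EqvGen.is_equivalence _⟩)) = Nat.gcd a b := by
  have hd0 : Nat.gcd a b ≠ 0 := by
    intro h0
    rw [Nat.gcd_eq_zero_iff] at h0
    omega
  haveI : NeZero (Nat.gcd a b) := ⟨hd0⟩
  have hdn : Nat.gcd a b ≤ a + b :=
    Nat.le_of_dvd (Nat.pos_of_ne_zero hab)
      (Nat.dvd_add (Nat.gcd_dvd_left a b) (Nat.gcd_dvd_right a b))
  set S := Setoid.comap
      (Subtype.val : {x : ℕ // 1 ≤ x ∧ x ≤ a + b} → ℕ)
      ⟨Relation.EqvGen (fun u v : ℕ =>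
          (1 ≤ u ∧ u ≤ b ∧ v = u + a) ∨ (1 ≤ u ∧ u ≤ a ∧ v = u + b)),
        Relation.EqvGen.is_equivalence _⟩ with hS
  have hrel : ∀ x y : {x : ℕ // 1 ≤ x ∧ x ≤ a + b},
      S.r x y ↔ Relation.EqvGen (R a b) x.val y.val := by
    intro x y
    rfl
  let φ : Quotient S → ZMod (Nat.gcd a b) :=
    Quotient.lift (fun x : {x : ℕ // 1 ≤ x ∧ x ≤ a + b} => ((x.val : ℕ) : ZMod (Nat.gcd a b)))
      (by
        intro x y hxy
        exact forwardE a b x.val y.val ((hrel x y).mp hxy))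
  have hbij : Function.Bijective φ := by
    constructor
    · intro u v
      induction u using Quotient.ind with | _ x =>
      induction v using Quotient.ind with | _ y =>
      intro hxy
      refine Quotient.sound ((hrel x y).mpr ?_)
      exact backward a b hab x.val y.val x.2.1 x.2.2 y.2.1 y.2.2 hxy
    · intro z
      by_cases hz : z.val = 0
      · refine ⟨Quotient.mk S ⟨Nat.gcd a b, Nat.pos_of_ne_zero hd0, hdn⟩, ?_⟩
        show ((Nat.gcd a b : ℕ) : ZMod (Nat.gcd a b)) = z
        rw [ZMod.natCast_self]
        rw [(ZMod.val_eq_zero z).mp hz]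
      · have hz1 : 1 ≤ z.val := Nat.pos_of_ne_zero hz
        have hz2 : z.val ≤ a + b := le_trans (le_of_lt (ZMod.val_lt z)) hdn
        refine ⟨Quotient.mk S ⟨z.val, hz1, hz2⟩, ?_⟩
        show ((z.val : ℕ) : ZMod (Nat.gcd a b)) = z
        simp [ZMod.natCast_val, ZMod.cast_id]
  calc Nat.card (Quotient S) = Nat.card (ZMod (Nat.gcd a b)) :=
        Nat.card_congr (Equiv.ofBijective φ hbij)
    _ = Nat.gcd a b := Nat.card_zmod _
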